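/- Optimized lower bound on the gradient noise function (Lemma 5, optimal c): let f : ℝ^d → ℝ be differentiable, μ-strongly convex and L-smooth with minimizer x* (so ∇f(x*) = 0), let 𝓛 > 0, μ > 0, L > 0, and for each x ∈ ℝ^d let G_x : Ω → ℝ^d be a square-integrable random vector on a probability space (Ω, P) with ∫ G_x dP = ∇f(x) and ∫ ‖G_x − G_{x*}‖² dP ≤ 2𝓛·(f(x) − f(x*)). Define σ(x) := ∫ ‖G_x‖² dP. Then for every x ∈ ℝ^d, σ(x) ≥ [ (√(𝓛·L + μ²) − √(𝓛·L))² / μ² ] · σ(x*). -/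

import Mathlib

open MeasureTheory RealInnerProductSpace


set_option maxHeartbeats 800000 in
lemma stmt13_aux {μ L 𝓛 : ℝ} (hμ : 0 < μ) (hL : 0 < L) (h𝓛 : 0 < 𝓛) (hμL : μ ≤ L) :
    (Real.sqrt (𝓛 * L + μ ^ 2) - Real.sqrt (𝓛 * L)) ^ 2 / μ ^ 2
      * (1 + Real.sqrt (𝓛 / μ)) ^ 2 ≤ 1 := by
  set A := Real.sqrt (𝓛 * L) with hA
  set B := Real.sqrt (𝓛 * L + μ ^ 2) with hB
  set t := Real.sqrt (𝓛 / μ) with ht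
  have hA0 : 0 ≤ A := Real.sqrt_nonneg _
  have hB0 : 0 ≤ B := Real.sqrt_nonneg _
  have ht0 : 0 ≤ t := Real.sqrt_nonneg _
  have hA2 : A ^ 2 = 𝓛 * L := Real.sq_sqrt (by positivity)
  have hB2 : B ^ 2 = 𝓛 * L + μ ^ 2 := Real.sq_sqrt (by positivity)
  have ht2 : t ^ 2 = 𝓛 / μ := Real.sq_sqrt (by positivity)
  have hμB : μ ≤ B := by nlinarith
  have hμt : μ * t ≤ A := by
    have h1 : (μ * t) ^ 2 = μ * 𝓛 := by rw [mul_pow, ht2]; field_simp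
    nlinarith [sq_nonneg (μ * t + A), sq_nonneg (μ * t - A)]
  have hBA0 : 0 ≤ B - A := by nlinarith
  have hsum : μ * (1 + t) ≤ B + A := by nlinarith
  have hdiff : (B - A) * (B + A) = μ ^ 2 := by nlinarith
  have hBA : (B - A) * (1 + t) ≤ μ := by
    have h2 := mul_le_mul_of_nonneg_left hsum hBA0
    nlinarith
  rw [div_mul_eq_mul_div, div_le_one (by positivity)]
  have h0 : 0 ≤ (B - A) * (1 + t) := by nlinarith
  nlinarith

set_option maxHeartbeats 1000000 in
/-- Optimized lower bound on the gradient noise function (Lemma 5, optimal `c`). -/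
theorem stmt13 {d : ℕ} {Ω : Type*} [MeasurableSpace Ω]
    (P : Measure Ω) [IsProbabilityMeasure P]
    (f : EuclideanSpace ℝ (Fin d) → ℝ)
    (gf : EuclideanSpace ℝ (Fin d) → EuclideanSpace ℝ (Fin d))
    (hgrad : ∀ z, HasGradientAt f (gf z) z)
    (μ L 𝓛 : ℝ) (hμ : 0 < μ) (hL : 0 < L) (h𝓛 : 0 < 𝓛)
    (hsc : ∀ z w, f w ≥ f z + ⟪gf z, w - z⟫ + μ / 2 * ‖w - z‖ ^ 2)
    (hLip : ∀ z w, ‖gf z - gf w‖ ≤ L * ‖z - w‖)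
    (xstar : EuclideanSpace ℝ (Fin d)) (hmin : ∀ z, f xstar ≤ f z)
    (hgrad0 : gf xstar = 0)
    (G : EuclideanSpace ℝ (Fin d) → Ω → EuclideanSpace ℝ (Fin d))
    (hGL2 : ∀ z, MemLp (G z) 2 P)
    (hmean : ∀ z, ∫ ω, G z ω ∂P = gf z)
    (hES : ∀ z, ∫ ω, ‖G z ω - G xstar ω‖ ^ 2 ∂P ≤ 2 * 𝓛 * (f z - f xstar)) :
    ∀ x : EuclideanSpace ℝ (Fin d),
      (Real.sqrt (𝓛 * L + μ ^ 2) - Real.sqrt (𝓛 * L)) ^ 2 / μ ^ 2 *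
          ∫ ω, ‖G xstar ω‖ ^ 2 ∂P ≤
        ∫ ω, ‖G x ω‖ ^ 2 ∂P := by
  intro x
  set A := Real.sqrt (𝓛 * L) with hA
  set B := Real.sqrt (𝓛 * L + μ ^ 2) with hB
  have hA0 : 0 ≤ A := Real.sqrt_nonneg _
  have hB0 : 0 ≤ B := Real.sqrt_nonneg _
  have hA2 : A ^ 2 = 𝓛 * L := Real.sq_sqrt (by positivity)
  have hB2 : B ^ 2 = 𝓛 * L + μ ^ 2 := Real.sq_sqrt (by positivity)
  have hμB : μ ≤ B := by
    nlinarith [Real.sqrt_nonneg (𝓛 * L + μ ^ 2)]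
  -- nonnegativity of the integrals
  have hσx : 0 ≤ ∫ ω, ‖G x ω‖ ^ 2 ∂P := integral_nonneg fun ω => by positivity
  have hσs : 0 ≤ ∫ ω, ‖G xstar ω‖ ^ 2 ∂P := integral_nonneg fun ω => by positivity
  rcases eq_or_ne x xstar with rfl | hne
  · -- trivial case: constant is ≤ 1
    have hk : (B - A) ^ 2 / μ ^ 2 ≤ 1 := by
      rw [div_le_one (by positivity)]
      nlinarith [Real.sqrt_le_sqrt (show 𝓛 * L ≤ 𝓛 * L + μ ^ 2 by nlinarith)]
    nlinarith
  · -- main case: first μ ≤ L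
    have hr0 : (0:ℝ) < ‖x - xstar‖ := by
      simpa [sub_eq_zero] using norm_pos_iff.mpr (sub_ne_zero.mpr hne)
    set r := ‖x - xstar‖ with hrdef
    set g := ‖gf x‖ with hgdef
    -- strong convexity facts
    have h1 := hsc x xstar
    have h2 := hsc xstar x
    rw [hgrad0] at h2
    simp only [inner_zero_left] at h2
    have hrs : ‖xstar - x‖ = r := by rw [hrdef, norm_sub_rev]
    rw [hrs] at h1
    have hxr : ‖x - xstar‖ = r := hrdef.symm
    rw [hxr] at h2
    have hflip : ⟪gf x, x - xstar⟫ = -⟪gf x, xstar - x⟫ := by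
      rw [← inner_neg_right]; congr 1; abel
    have hinner : μ * r ^ 2 ≤ ⟪gf x, x - xstar⟫ := by
      have := hmin x
      nlinarith [h1, h2, hflip]
    have hCS : ⟪gf x, x - xstar⟫ ≤ g * r := real_inner_le_norm _ _
    have hμr : μ * r ≤ g := by
      have : μ * r ^ 2 ≤ g * r := le_trans hinner hCS
      nlinarith
    have hμL : μ ≤ L := by
      have := hLip x xstar
      rw [hgrad0, sub_zero] at this
      nlinarith
    -- gap bound: f x - f xstar ≤ g^2 / (2μ)
    have hgap : f x - f xstar ≤ g ^ 2 / (2 * μ) := by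
      have hub : f x - f xstar ≤ g * r - μ / 2 * r ^ 2 := by
        nlinarith [h1, hCS, hflip]
      rw [le_div_iff₀ (by positivity)]
      nlinarith [sq_nonneg (g - μ * r)]
    -- Jensen: g^2 ≤ σx
    have hJ : g ^ 2 ≤ ∫ ω, ‖G x ω‖ ^ 2 ∂P := by
      have hmem : MemLp (fun ω => ‖G x ω‖) 2 P := (hGL2 x).norm
      have hvar := ProbabilityTheory.variance_nonneg (fun ω => ‖G x ω‖) P
      rw [ProbabilityTheory.variance_eq_sub hmem] at hvar
      have hnn : ‖gf x‖ ≤ ∫ ω, ‖G x ω‖ ∂P := by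
        rw [← hmean x]; exact norm_integral_le_integral_norm _
      have hint : (∫ ω, ‖G x ω‖ ∂P) ^ 2 ≤ ∫ ω, ‖G x ω‖ ^ 2 ∂P := by
        have : (∫ ω, (fun ω => ‖G x ω‖) ω ∂P) ^ 2 ≤ ∫ ω, ((fun ω => ‖G x ω‖) ^ 2) ω ∂P := by
          linarith [hvar]
        simpa [Pi.pow_apply] using this
      have h0 : (0:ℝ) ≤ ∫ ω, ‖G x ω‖ ∂P := integral_nonneg fun ω => norm_nonneg _
      calc g ^ 2 ≤ (∫ ω, ‖G x ω‖ ∂P) ^ 2 := by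
            exact pow_le_pow_left₀ (norm_nonneg _) hnn 2
        _ ≤ _ := hint
    -- expected smoothness bound
    have hD : ∫ ω, ‖G x ω - G xstar ω‖ ^ 2 ∂P ≤ 𝓛 / μ * ∫ ω, ‖G x ω‖ ^ 2 ∂P := by
      calc ∫ ω, ‖G x ω - G xstar ω‖ ^ 2 ∂P ≤ 2 * 𝓛 * (f x - f xstar) := hES x
        _ ≤ 2 * 𝓛 * (g ^ 2 / (2 * μ)) := by
            exact mul_le_mul_of_nonneg_left hgap (by positivity)
        _ = 𝓛 / μ * g ^ 2 := by field_simp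
        _ ≤ 𝓛 / μ * ∫ ω, ‖G x ω‖ ^ 2 ∂P := by
            exact mul_le_mul_of_nonneg_left hJ (by positivity)
    -- pointwise splitting with parameter t = sqrt(𝓛/μ)
    set t := Real.sqrt (𝓛 / μ) with ht
    have ht0 : 0 < t := Real.sqrt_pos.mpr (by positivity)
    have ht2 : t ^ 2 = 𝓛 / μ := Real.sq_sqrt (by positivity)
    have hintx : Integrable (fun ω => ‖G x ω‖ ^ 2) P := ((hGL2 x).norm).integrable_sq
    have hintd : Integrable (fun ω => ‖G x ω - G xstar ω‖ ^ 2) P :=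
      (((hGL2 x).sub (hGL2 xstar)).norm).integrable_sq
    have hsplit : ∫ ω, ‖G xstar ω‖ ^ 2 ∂P ≤
        ∫ ω, ((1 + t) * ‖G x ω‖ ^ 2 + (1 + 1/t) * ‖G x ω - G xstar ω‖ ^ 2) ∂P := by
      refine integral_mono ((hGL2 xstar).norm).integrable_sq
        ((hintx.const_mul _).add (hintd.const_mul _)) (fun ω => ?_)
      have h1 : ‖G xstar ω‖ ≤ ‖G x ω‖ + ‖G x ω - G xstar ω‖ := by
        have h := norm_sub_le (G x ω) (G x ω - G xstar ω)
        rwa [sub_sub_cancel] at h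
      have hn1 : (0:ℝ) ≤ ‖G x ω‖ := norm_nonneg _
      have hn2 : (0:ℝ) ≤ ‖G x ω - G xstar ω‖ := norm_nonneg _
      have hn3 : (0:ℝ) ≤ ‖G xstar ω‖ := norm_nonneg _
      have hy : 2 * (‖G x ω‖ * ‖G x ω - G xstar ω‖) ≤
          t * ‖G x ω‖ ^ 2 + 1/t * ‖G x ω - G xstar ω‖ ^ 2 := by
        have hdiffeq : t * ‖G x ω‖ ^ 2 + 1/t * ‖G x ω - G xstar ω‖ ^ 2
            - 2 * (‖G x ω‖ * ‖G x ω - G xstar ω‖)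
            = (t * ‖G x ω‖ - ‖G x ω - G xstar ω‖) ^ 2 / t := by
          field_simp; ring
        linarith [div_nonneg (sq_nonneg (t * ‖G x ω‖ - ‖G x ω - G xstar ω‖)) ht0.le,
          hdiffeq]
      nlinarith [sq_nonneg (‖G x ω‖ + ‖G x ω - G xstar ω‖ - ‖G xstar ω‖)]
    rw [integral_add (hintx.const_mul _) (hintd.const_mul _),
        integral_const_mul, integral_const_mul] at hsplit
    -- combine: σ* ≤ (1+t)^2 σx
    have hmain : ∫ ω, ‖G xstar ω‖ ^ 2 ∂P ≤ (1 + t) ^ 2 * ∫ ω, ‖G x ω‖ ^ 2 ∂P := by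
      have h1t : (0:ℝ) ≤ 1 + 1/t := by positivity
      have := mul_le_mul_of_nonneg_left hD h1t
      have hkey : (1 + 1/t) * (𝓛 / μ) = (t + t^2) := by
        have e : 𝓛 = t ^ 2 * μ := by rw [ht2]; field_simp
        rw [e]; field_simp; ring
      calc ∫ ω, ‖G xstar ω‖ ^ 2 ∂P
          ≤ (1 + t) * (∫ ω, ‖G x ω‖ ^ 2 ∂P) + (1 + 1/t) * ∫ ω, ‖G x ω - G xstar ω‖ ^ 2 ∂P := hsplit
        _ ≤ (1 + t) * (∫ ω, ‖G x ω‖ ^ 2 ∂P) + (1 + 1/t) * (𝓛 / μ * ∫ ω, ‖G x ω‖ ^ 2 ∂P) := by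
            linarith
        _ = (1 + t) ^ 2 * ∫ ω, ‖G x ω‖ ^ 2 ∂P := by
            rw [← mul_assoc, hkey]; ring
    -- final constant comparison via the auxiliary lemma
    have hconst : (B - A) ^ 2 / μ ^ 2 * (1 + t) ^ 2 ≤ 1 :=
      stmt13_aux hμ hL h𝓛 hμL
    have hk0 : 0 ≤ (B - A) ^ 2 / μ ^ 2 := by positivity
    calc (B - A) ^ 2 / μ ^ 2 * ∫ ω, ‖G xstar ω‖ ^ 2 ∂P
        ≤ (B - A) ^ 2 / μ ^ 2 * ((1 + t) ^ 2 * ∫ ω, ‖G x ω‖ ^ 2 ∂P) :=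
          mul_le_mul_of_nonneg_left hmain hk0
      _ = ((B - A) ^ 2 / μ ^ 2 * (1 + t) ^ 2) * ∫ ω, ‖G x ω‖ ^ 2 ∂P := by ring
      _ ≤ 1 * ∫ ω, ‖G x ω‖ ^ 2 ∂P := mul_le_mul_of_nonneg_right hconst hσx
      _ = _ := one_mul _
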